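/- arXiv:1503.05775 — 2 statements merged into one kernel-verified Lean document; each statement's English description precedes it below -/
import Mathlib

section
/- For any template s, a point z belongs to the template escape set if and only if |ξ_n(z)| → ∞ as n → ∞; i.e., every unbounded template orbit tends to infinity in modulus. -/
open Complex

/-- The template orbit: `ξ 0 = z`, `ξ (n+1) = (ξ n)^2 + c_{s n}`. -/
noncomputable def tOrbit (c0 c1 : ℂ) (s : ℕ → Fin 2) (z : ℂ) : ℕ → ℂ
  | 0 => z
  | n + 1 => (tOrbit c0 c1 s z n) ^ 2 + (if s n = 0 then c0 else c1)

/-- The template prisoner set: points with bounded template orbit. -/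
def prisoner (c0 c1 : ℂ) (s : ℕ → Fin 2) : Set ℂ :=
  {z | ∃ M : ℝ, ∀ n, ‖tOrbit c0 c1 s z n‖ ≤ M}

/-- The template escape set: points with unbounded template orbit. -/
def escape (c0 c1 : ℂ) (s : ℕ → Fin 2) : Set ℂ :=
  {z | ¬ ∃ M : ℝ, ∀ n, ‖tOrbit c0 c1 s z n‖ ≤ M}

theorem stmt5 (c0 c1 : ℂ) (s : ℕ → Fin 2) (z : ℂ) :
    z ∈ escape c0 c1 s ↔
      Filter.Tendsto (fun n => ‖tOrbit c0 c1 s z n‖) Filter.atTop Filter.atTop := by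
  constructor
  · intro hz
    set ξ := tOrbit c0 c1 s z with hξ
    set C : ℝ := max (‖c0‖) (‖c1‖) + 2 with hC
    have hC2 : (2 : ℝ) ≤ C := by
      have : (0 : ℝ) ≤ max (‖c0‖) (‖c1‖) :=
        le_max_of_le_left (norm_nonneg _)
      linarith
    have hCpos : (0 : ℝ) < C := by linarith
    -- get N with |ξ N| ≥ C
    simp only [escape, Set.mem_setOf_eq, not_exists, not_forall, not_le] at hz
    obtain ⟨N, hN⟩ := hz C
    have hN' : C ≤ ‖ξ N‖ := le_of_lt hN
    -- key growth step
    have step : ∀ m, C ≤ ‖ξ m‖ →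
        2 * ‖ξ m‖ ≤ ‖ξ (m + 1)‖ := by
      intro m hm
      have hc : ‖if s m = 0 then c0 else c1‖ ≤ max (‖c0‖) (‖c1‖) := by
        split
        · exact le_max_left _ _
        · exact le_max_right _ _
      have habs : ‖ξ m‖ ^ 2 - ‖if s m = 0 then c0 else c1‖
          ≤ ‖ξ (m + 1)‖ := by
        have h1 : ‖(ξ m) ^ 2‖
            ≤ ‖(ξ m) ^ 2 + (if s m = 0 then c0 else c1)‖
              + ‖if s m = 0 then c0 else c1‖ := by
          have := norm_add_le ((ξ m) ^ 2 + (if s m = 0 then c0 else c1))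
            (-(if s m = 0 then c0 else c1))
          simpa using this
        have h2 : ‖(ξ m) ^ 2‖ = ‖ξ m‖ ^ 2 := by
          simp [map_pow]
        have : ‖ξ (m + 1)‖
            = ‖(ξ m) ^ 2 + (if s m = 0 then c0 else c1)‖ := by
          simp [hξ, tOrbit]
        rw [this]
        linarith [h1, h2.symm.le]
      have hx2 : ‖ξ m‖ ^ 2 - ‖if s m = 0 then c0 else c1‖
          ≥ 2 * ‖ξ m‖ := by
        have hxC : C ≤ ‖ξ m‖ := hm
        nlinarith [hc, hxC, hC2]
      linarith
    -- geometric growth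
    have geom : ∀ k, C * 2 ^ k ≤ ‖ξ (N + k)‖ := by
      intro k
      induction k with
      | zero => simpa using hN'
      | succ k ih =>
        have hpk : (1 : ℝ) ≤ 2 ^ k := one_le_pow₀ (one_le_two : (1:ℝ) ≤ 2)
        have hCle : C ≤ ‖ξ (N + k)‖ := by nlinarith
        have h2k : C * 2 ^ (k + 1) ≤ 2 * ‖ξ (N + k)‖ := by
          rw [pow_succ]
          nlinarith [ih]
        calc C * 2 ^ (k + 1) ≤ 2 * ‖ξ (N + k)‖ := h2k
          _ ≤ ‖ξ (N + k + 1)‖ := step (N + k) hCle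
    rw [Filter.tendsto_atTop]
    intro b
    obtain ⟨k, hk⟩ := pow_unbounded_of_one_lt (b / C) (one_lt_two (α := ℝ))
    rw [Filter.eventually_atTop]
    refine ⟨N + k, fun n hn => ?_⟩
    have hbk : b ≤ C * 2 ^ k := by
      have := (div_le_iff₀ hCpos).mp hk.le
      linarith
    have hmono : C * 2 ^ k ≤ C * 2 ^ (n - N) := by
      apply mul_le_mul_of_nonneg_left _ hCpos.le
      apply pow_le_pow_right₀ one_le_two
      omega
    have : C * 2 ^ (n - N) ≤ ‖ξ n‖ := by
      have := geom (n - N)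
      have hnN : N + (n - N) = n := by omega
      rwa [hnN] at this
    linarith
  · intro h hbd
    obtain ⟨M, hM⟩ := hbd
    have := (Filter.tendsto_atTop.mp h) (M + 1)
    rw [Filter.eventually_atTop] at this
    obtain ⟨n, hn⟩ := this
    have := hn n le_rfl
    have := hM n
    linarith
end

section
/- If z lies in the template escape set for template s, then there exists N ∈ ℕ such that z lies in the escape set for every template t agreeing with s on its first N entries; i.e., membership in the escape set is determined by a finite root of the template. -/
open Complex

lemma abs_sub_le_abs_add (x c : ℂ) : ‖x‖ - ‖c‖ ≤ ‖x + c‖ := by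
  have h : ‖x‖ ≤ ‖x + c‖ + ‖c‖ := by
    calc ‖x‖ = ‖(x + c) + (-c)‖ := by ring_nf
      _ ≤ ‖x + c‖ + ‖-c‖ := norm_add_le _ _
      _ = ‖x + c‖ + ‖c‖ := by rw [norm_neg]
  linarith

lemma tOrbit_grow (c0 c1 : ℂ) (t : ℕ → Fin 2) (z : ℂ) (N : ℕ)
    (hR : max 2 (max (‖c0‖) (‖c1‖)) < ‖tOrbit c0 c1 t z N‖) :
    ∀ k, ‖tOrbit c0 c1 t z N‖ * (‖tOrbit c0 c1 t z N‖ - 1) ^ k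
        ≤ ‖tOrbit c0 c1 t z (N + k)‖ := by
  set a := ‖tOrbit c0 c1 t z N‖ with ha
  have h2 : (2:ℝ) < a := lt_of_le_of_lt (le_max_left _ _) hR
  have hc : ∀ n, ‖if t n = 0 then c0 else c1‖ < a := by
    intro n; split
    · exact lt_of_le_of_lt (le_trans (le_max_left _ _) (le_max_right _ _)) hR
    · exact lt_of_le_of_lt (le_trans (le_max_right _ _) (le_max_right _ _)) hR
  intro k
  induction k with
  | zero => simp [ha]
  | succ k ih =>
    have hq1 : (1:ℝ) < a - 1 := by linarith
    have hpow : (1:ℝ) ≤ (a - 1) ^ k := one_le_pow₀ (le_of_lt hq1)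
    have hak : a ≤ ‖tOrbit c0 c1 t z (N + k)‖ := by
      calc a = a * 1 := (mul_one a).symm
        _ ≤ a * (a - 1) ^ k := by nlinarith
        _ ≤ _ := ih
    set b := ‖tOrbit c0 c1 t z (N + k)‖ with hb
    have hstep : b ^ 2 - a ≤ ‖tOrbit c0 c1 t z (N + k + 1)‖ := by
      have h1 := abs_sub_le_abs_add ((tOrbit c0 c1 t z (N + k)) ^ 2)
        (if t (N + k) = 0 then c0 else c1)
      rw [norm_pow] at h1
      have h2' := hc (N + k)
      have : ‖tOrbit c0 c1 t z (N + k + 1)‖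
          = ‖(tOrbit c0 c1 t z (N + k)) ^ 2 + (if t (N + k) = 0 then c0 else c1)‖ := by
        rfl
      rw [this]
      linarith
    have hbk : a * (a - 1) ^ k ≤ b := ih
    have : a * (a - 1) ^ (k + 1) ≤ b ^ 2 - a := by
      have hbig : a * (a - 1) ^ k * (a - 1) ≤ b * (a - 1) := by nlinarith
      have hb2 : b * (a - 1) ≤ b ^ 2 - a := by nlinarith
      calc a * (a - 1) ^ (k + 1) = a * (a - 1) ^ k * (a - 1) := by ring
        _ ≤ b * (a - 1) := hbig
        _ ≤ b ^ 2 - a := hb2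
    have := le_trans this hstep
    exact this

lemma tOrbit_congr (c0 c1 : ℂ) (s t : ℕ → Fin 2) (z : ℂ) (N : ℕ)
    (h : ∀ j < N, t j = s j) : ∀ n ≤ N, tOrbit c0 c1 t z n = tOrbit c0 c1 s z n := by
  intro n hn
  induction n with
  | zero => rfl
  | succ n ih =>
    have h1 : tOrbit c0 c1 t z n = tOrbit c0 c1 s z n := ih (le_of_lt hn)
    show (tOrbit c0 c1 t z n) ^ 2 + _ = (tOrbit c0 c1 s z n) ^ 2 + _
    rw [h1, h n hn]

theorem stmt16 (c0 c1 : ℂ) (s : ℕ → Fin 2) (z : ℂ)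
    (hz : z ∈ escape c0 c1 s) :
    ∃ N : ℕ, ∀ t : ℕ → Fin 2, (∀ j < N, t j = s j) → z ∈ escape c0 c1 t := by
  simp only [escape, Set.mem_setOf_eq, not_exists, not_forall, not_le] at hz ⊢
  obtain ⟨N, hN⟩ := hz (max 2 (max (‖c0‖) (‖c1‖)))
  refine ⟨N, fun t ht M => ?_⟩
  have heq : tOrbit c0 c1 t z N = tOrbit c0 c1 s z N :=
    tOrbit_congr c0 c1 s t z N ht N le_rfl
  have hR : max 2 (max (‖c0‖) (‖c1‖)) < ‖tOrbit c0 c1 t z N‖ := by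
    rw [heq]; exact hN
  set a := ‖tOrbit c0 c1 t z N‖ with ha
  have h2 : (2:ℝ) < a := lt_of_le_of_lt (le_max_left _ _) hR
  obtain ⟨k, hk⟩ := pow_unbounded_of_one_lt (R := ℝ) M (by linarith : (1:ℝ) < a - 1)
  refine ⟨N + k, ?_⟩
  have hg := tOrbit_grow c0 c1 t z N hR k
  have : M < a * (a - 1) ^ k := by
    have hp : (0:ℝ) < (a - 1) ^ k := pow_pos (by linarith) k
    nlinarith
  linarith [hg]
end
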